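/- With the same setup (irreducible rate matrix Q, stationary distribution μ with all μ_i > 0, probability distribution p with all p_i > 0), the non-adiabatic entropy production rate satisfies e_p^{(na)} = Σ_{i,j} p_i q_ij·log((p_i μ_j)/(p_j μ_i)) ≥ (1/2)·Σ_{i,j: i≠j} (q_ij/μ_j)·(p_i μ_j − p_j μ_i)². -/

import Mathlib

open Finset

lemma lemA {s : ℝ} (hs : 0 < s) (hs1 : s ≤ 1) :
    (1 - s) + (1 - s) ^ 2 / 2 ≤ -Real.log s := by
  set f : ℝ → ℝ := fun x => -Real.log x - (1 - x) - (1 - x) ^ 2 / 2 with hf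
  have hder : ∀ x : ℝ, 0 < x → HasDerivAt f (2 - x - 1 / x) x := by
    intro x hx
    have h1 : HasDerivAt (fun x : ℝ => -Real.log x) (-(1 / x)) x :=
      ((Real.hasDerivAt_log hx.ne').neg).congr_deriv (by simp [one_div])
    have h2 : HasDerivAt (fun x : ℝ => (1 - x)) (-1) x := by
      simpa using (hasDerivAt_id x).const_sub 1
    have h3 : HasDerivAt (fun x : ℝ => (1 - x) ^ 2 / 2) ((2 * (1 - x) ^ 1 * (-1)) / 2) x :=
      (h2.pow 2).div_const 2
    have := (h1.sub h2).sub h3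
    exact this.congr_deriv (by ring)
  have hanti : AntitoneOn f (Set.Icc s 1) := by
    apply antitoneOn_of_deriv_nonpos (convex_Icc s 1)
    · intro x hx
      exact (hder x (lt_of_lt_of_le hs hx.1)).differentiableAt.continuousAt.continuousWithinAt
    · intro x hx
      rw [interior_Icc] at hx
      exact (hder x (hs.trans hx.1)).differentiableAt.differentiableWithinAt
    · intro x hx
      rw [interior_Icc] at hx
      have hx0 : 0 < x := hs.trans hx.1
      rw [(hder x hx0).deriv]
      have : 2 - x - 1 / x = -((x - 1) ^ 2) / x := by field_simp; ring
      rw [this]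
      apply div_nonpos_of_nonpos_of_nonneg (by nlinarith [sq_nonneg (x - 1)]) hx0.le
  have := hanti (Set.mem_Icc.mpr ⟨le_refl s, hs1⟩) (Set.mem_Icc.mpr ⟨hs1, le_refl 1⟩) hs1
  simp only [hf, Real.log_one] at this
  nlinarith [this]

lemma lemB {t : ℝ} (ht : 0 < t) (ht1 : t ≤ 1) :
    (t - 1) ^ 2 / 2 ≤ t * Real.log t - t + 1 := by
  set f : ℝ → ℝ := fun x => x * Real.log x - x + 1 - (x - 1) ^ 2 / 2 with hf
  have hder : ∀ x : ℝ, 0 < x → HasDerivAt f (Real.log x - x + 1) x := by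
    intro x hx
    have h1 : HasDerivAt (fun x : ℝ => x * Real.log x) (Real.log x + 1) x :=
      Real.hasDerivAt_mul_log hx.ne'
    have h2 : HasDerivAt (fun x : ℝ => (x - 1) ^ 2 / 2) ((2 * (x - 1) ^ 1 * 1) / 2) x := by
      exact (((hasDerivAt_id x).sub_const 1).pow 2).div_const 2
    have := ((h1.sub (hasDerivAt_id x)).add_const 1).sub h2
    exact this.congr_deriv (by ring)
  have hanti : AntitoneOn f (Set.Icc t 1) := by
    apply antitoneOn_of_deriv_nonpos (convex_Icc t 1)
    · intro x hx
      exact (hder x (lt_of_lt_of_le ht hx.1)).differentiableAt.continuousAt.continuousWithinAt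
    · intro x hx
      rw [interior_Icc] at hx
      exact (hder x (ht.trans hx.1)).differentiableAt.differentiableWithinAt
    · intro x hx
      rw [interior_Icc] at hx
      have hx0 : 0 < x := ht.trans hx.1
      rw [(hder x hx0).deriv]
      have := Real.log_le_sub_one_of_pos hx0
      linarith
  have := hanti (Set.mem_Icc.mpr ⟨le_refl t, ht1⟩) (Set.mem_Icc.mpr ⟨ht1, le_refl 1⟩) ht1
  simp only [hf, Real.log_one] at this
  nlinarith [this]

lemma keyIneq {x y K : ℝ} (hx : 0 < x) (hy : 0 < y) (hxK : x ≤ K) (hyK : y ≤ K) :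
    (y - x) + (y - x) ^ 2 / (2 * K) ≤ y * Real.log (y / x) := by
  have hK : 0 < K := lt_of_lt_of_le hx hxK
  set l := Real.log (y / x) with hl
  rcases le_total x y with h | h
  · have hs : 0 < x / y := div_pos hx hy
    have hs1 : x / y ≤ 1 := (div_le_one hy).mpr h
    have hA := lemA hs hs1
    have h2 : -Real.log (x / y) = l := by
      rw [hl, Real.log_div hx.ne' hy.ne', Real.log_div hy.ne' hx.ne']; ring
    rw [h2] at hA
    have h3 := mul_le_mul_of_nonneg_left hA hy.le
    have e : y * ((1 - x / y) + (1 - x / y) ^ 2 / 2) = (y - x) + (y - x) ^ 2 / (2 * y) := by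
      field_simp
    have hq : (y - x) ^ 2 / (2 * K) ≤ (y - x) ^ 2 / (2 * y) :=
      div_le_div_of_nonneg_left (sq_nonneg _) (by positivity) (by linarith)
    linarith [h3, e, hq]
  · have hs : 0 < y / x := div_pos hy hx
    have hs1 : y / x ≤ 1 := (div_le_one hx).mpr h
    have hB := lemB hs hs1
    have h2 : Real.log (y / x) = l := rfl
    have h3 := mul_le_mul_of_nonneg_left hB hx.le
    have e : x * ((y / x - 1) ^ 2 / 2) = (y - x) ^ 2 / (2 * x) := by field_simp
    have e2 : x * (y / x * l - y / x + 1) = y * l - y + x := by field_simp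
    have hq : (y - x) ^ 2 / (2 * K) ≤ (y - x) ^ 2 / (2 * x) :=
      div_le_div_of_nonneg_left (sq_nonneg _) (by positivity) (by linarith)
    linarith [h3, e, e2, hq]

theorem nonadiabatic_ep_intermediate_bound (N : ℕ) (q : Fin N → Fin N → ℝ)
    (μ p : Fin N → ℝ)
    (hq : ∀ i j, i ≠ j → 0 ≤ q i j)
    (hqrow : ∀ i, ∑ j, q i j = 0)
    (hirr : ∀ i j : Fin N, i ≠ j → ∃ (m : ℕ) (c : Fin (m + 1) → Fin N),
      c 0 = i ∧ c (Fin.last m) = j ∧ ∀ k : Fin m, 0 < q (c k.castSucc) (c k.succ))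
    (hμpos : ∀ i, 0 < μ i) (hμ1 : ∑ i, μ i = 1)
    (hstat : ∀ j, ∑ i, μ i * q i j = 0)
    (hppos : ∀ i, 0 < p i) (hp1 : ∑ i, p i = 1) :
    ∑ i, ∑ j, p i * q i j * Real.log ((p i * μ j) / (p j * μ i)) ≥
      (1 / 2) * ∑ i, ∑ j ∈ Finset.univ.erase i,
        (q i j / μ j) * (p i * μ j - p j * μ i) ^ 2 := by
  have hμle : ∀ i, μ i ≤ 1 := fun i => hμ1 ▸
    Finset.single_le_sum (fun j _ => (hμpos j).le) (mem_univ i)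
  have hple : ∀ i, p i ≤ 1 := fun i => hp1 ▸
    Finset.single_le_sum (fun j _ => (hppos j).le) (mem_univ i)
  -- pointwise bound
  have hpt : ∀ i j, μ i * q i j * (p i / μ i - p j / μ j)
      + (1 / 2) * ((q i j / μ j) * (p i * μ j - p j * μ i) ^ 2)
      ≤ p i * q i j * Real.log ((p i * μ j) / (p j * μ i)) := by
    intro i j
    by_cases hij : i = j
    · subst hij
      simp only [sub_self, mul_zero, zero_pow, zero_add, ne_eq, OfNat.ofNat_ne_zero,
        not_false_eq_true, zero_mul, add_zero]
      rw [div_self (mul_pos (hppos i) (hμpos i)).ne', Real.log_one, mul_zero]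
    · rcases eq_or_lt_of_le (hq i j hij) with hq0 | hq0
      · rw [← hq0]; simp
      · have hμi := hμpos i
        have hμj := hμpos j
        have hpi := hppos i
        have hpj := hppos j
        have hx : 0 < p j / μ j := div_pos hpj hμj
        have hy : 0 < p i / μ i := div_pos hpi hμi
        have hxK : p j / μ j ≤ 1 / (μ i * μ j) := by
          rw [div_le_div_iff₀ hμj (by positivity)]
          have h1 : p j * μ i ≤ 1 := by nlinarith [hple j, hμle i]
          nlinarith [h1, hμj.le]
        have hyK : p i / μ i ≤ 1 / (μ i * μ j) := by
          rw [div_le_div_iff₀ hμi (by positivity)]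
          have h1 : p i * μ j ≤ 1 := by nlinarith [hple i, hμle j]
          nlinarith [h1, hμi.le]
        have hkey := keyIneq hx hy hxK hyK
        have hm := mul_le_mul_of_nonneg_left hkey (mul_pos hμi hq0).le
        have hlog : (p i / μ i) / (p j / μ j) = (p i * μ j) / (p j * μ i) := by
          field_simp
        have e1 : μ i * q i j * ((p i / μ i - p j / μ j)
            + (p i / μ i - p j / μ j) ^ 2 / (2 * (1 / (μ i * μ j))))
            = μ i * q i j * (p i / μ i - p j / μ j)
              + (1 / 2) * ((q i j / μ j) * (p i * μ j - p j * μ i) ^ 2) := by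
          field_simp
        have e2 : μ i * q i j * (p i / μ i * Real.log ((p i / μ i) / (p j / μ j)))
            = p i * q i j * Real.log ((p i * μ j) / (p j * μ i)) := by
          rw [hlog]; field_simp
        rw [← e1, ← e2]
        exact hm
  have hsum : ∑ i, ∑ j, (μ i * q i j * (p i / μ i - p j / μ j)
      + (1 / 2) * ((q i j / μ j) * (p i * μ j - p j * μ i) ^ 2))
      ≤ ∑ i, ∑ j, p i * q i j * Real.log ((p i * μ j) / (p j * μ i)) :=
    Finset.sum_le_sum fun i _ => Finset.sum_le_sum fun j _ => hpt i j
  have hzero : ∑ i, ∑ j, μ i * q i j * (p i / μ i - p j / μ j) = 0 := by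
    have hsplit : ∀ i j : Fin N, μ i * q i j * (p i / μ i - p j / μ j)
        = (p i / μ i * μ i) * q i j - p j / μ j * (μ i * q i j) := fun i j => by ring
    simp_rw [hsplit, Finset.sum_sub_distrib, ← Finset.mul_sum, hqrow, mul_zero,
      Finset.sum_const_zero, zero_sub]
    rw [Finset.sum_comm]
    simp_rw [← Finset.mul_sum, hstat, mul_zero, Finset.sum_const_zero, neg_zero]
  have hS : ∑ i, ∑ j ∈ Finset.univ.erase i, (q i j / μ j) * (p i * μ j - p j * μ i) ^ 2
      = ∑ i, ∑ j, (q i j / μ j) * (p i * μ j - p j * μ i) ^ 2 :=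
    Finset.sum_congr rfl fun i _ => Finset.sum_erase _ (by simp)
  have hexpand : ∑ i, ∑ j, (μ i * q i j * (p i / μ i - p j / μ j)
      + (1 / 2) * ((q i j / μ j) * (p i * μ j - p j * μ i) ^ 2))
      = (∑ i, ∑ j, μ i * q i j * (p i / μ i - p j / μ j))
        + (1 / 2) * ∑ i, ∑ j, (q i j / μ j) * (p i * μ j - p j * μ i) ^ 2 := by
    simp_rw [Finset.sum_add_distrib, Finset.mul_sum]
  rw [ge_iff_le, hS]
  linarith [hsum, hzero, hexpand]
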